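/- Let X be an abstract tectonic crater and let π: Y → X be a Galois covering of finite connected graphs. Color each edge e of Y by the color (blue or green) of π(e); then at each vertex v of Y there is exactly one blue (resp. green) edge with source v, and b_Y(v) (resp. g_Y(v)) denotes its target. If b_Y ∘ g_Y = g_Y ∘ b_Y, then Y is an abstract tectonic crater. -/

import Mathlib

/-! # Multigraphs, coverings, voltage assignments

Directed multigraphs (with loops and multiple edges allowed), undirected multigraphs
(encoded à la Serre, as directed graphs with an edge-inversion), morphisms, coverings,
sheet numbers, deck transformation groups, Galois coverings, voltage assignments and
their derived graphs, connectedness, connected components, directed cycle graphs,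
abstract (tectonic) craters and (tectonic) `l`-volcanoes. -/

/-- A directed multigraph. -/
structure Digraph' : Type 1 where
  V : Type
  E : Type
  src : E → V
  tgt : E → V

namespace Digraph'

variable (X : Digraph')

/-- Two vertices are adjacent if some edge goes from the first to the second. -/
def Adj (v w : X.V) : Prop := ∃ e : X.E, X.src e = v ∧ X.tgt e = w

/-- Two vertices lie in the same connected component (of the underlying
undirected graph). -/
def Reach (v w : X.V) : Prop := Relation.EqvGen X.Adj v w

/-- A graph is connected if any two vertices lie in the same connected component. -/
def Connected : Prop := ∀ v w : X.V, X.Reach v w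

/-- The set of vertices of the connected component containing `v`. -/
def ComponentSet (v : X.V) : Set X.V := {w | X.Reach v w}

/-- The number of connected components. -/
noncomputable def NumComponents : ℕ := Nat.card (Quot X.Adj)

/-- The subgraph generated by a set `S` of vertices: its edges are the edges of `X`
having both endpoints in `S`. -/
def induced (S : Set X.V) : Digraph' where
  V := S
  E := {e : X.E // X.src e ∈ S ∧ X.tgt e ∈ S}
  src e := ⟨X.src e.1, e.2.1⟩
  tgt e := ⟨X.tgt e.1, e.2.2⟩

end Digraph'

/-- A morphism of directed multigraphs. -/
structure DigraphHom (Y X : Digraph') where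
  onV : Y.V → X.V
  onE : Y.E → X.E
  map_src : ∀ e, X.src (onE e) = onV (Y.src e)
  map_tgt : ∀ e, X.tgt (onE e) = onV (Y.tgt e)

namespace DigraphHom

/-- The identity morphism. -/
def id (X : Digraph') : DigraphHom X X :=
  ⟨fun v => v, fun e => e, fun _ => rfl, fun _ => rfl⟩

/-- Composition of morphisms of directed multigraphs. -/
def comp {Z Y X : Digraph'} (g : DigraphHom Y X) (f : DigraphHom Z Y) :
    DigraphHom Z X where
  onV := g.onV ∘ f.onV
  onE := g.onE ∘ f.onE
  map_src e := by simp only [Function.comp_apply, g.map_src, f.map_src]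
  map_tgt e := by simp only [Function.comp_apply, g.map_tgt, f.map_tgt]

end DigraphHom

/-- A covering of directed multigraphs: a surjective morphism which is a local
bijection (it restricts to a bijection on the edges emanating from, respectively
arriving at, each given vertex). -/
def IsGraphCovering {Y X : Digraph'} (f : DigraphHom Y X) : Prop :=
  Function.Surjective f.onV ∧
    (∀ v : Y.V, Set.BijOn f.onE {e | Y.src e = v} {e | X.src e = f.onV v}) ∧
    (∀ v : Y.V, Set.BijOn f.onE {e | Y.tgt e = v} {e | X.tgt e = f.onV v})

/-- A morphism of graphs is `d`-sheeted if every vertex downstairs has exactly `d`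
preimages. -/
def IsSheeted {Y X : Digraph'} (f : DigraphHom Y X) (d : ℕ) : Prop :=
  ∀ x : X.V, Nat.card {y : Y.V // f.onV y = x} = d

/-- The group of deck transformations of `f : Y → X`: pairs of permutations of the
vertices and of the edges of `Y` which are compatible with the graph structure and
commute with `f`. -/
def DeckGroup {Y X : Digraph'} (f : DigraphHom Y X) :
    Subgroup (Equiv.Perm Y.V × Equiv.Perm Y.E) where
  carrier := {σ | (∀ e, Y.src (σ.2 e) = σ.1 (Y.src e)) ∧
    (∀ e, Y.tgt (σ.2 e) = σ.1 (Y.tgt e)) ∧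
    (∀ v, f.onV (σ.1 v) = f.onV v) ∧ (∀ e, f.onE (σ.2 e) = f.onE e)}
  one_mem' := ⟨fun _ => rfl, fun _ => rfl, fun _ => rfl, fun _ => rfl⟩
  mul_mem' := by
    rintro σ τ ⟨h1, h2, h3, h4⟩ ⟨g1, g2, g3, g4⟩
    exact ⟨fun e => by simp [Equiv.Perm.mul_apply, h1, g1],
      fun e => by simp [Equiv.Perm.mul_apply, h2, g2],
      fun v => by simp [Equiv.Perm.mul_apply, h3, g3],
      fun e => by simp [Equiv.Perm.mul_apply, h4, g4]⟩
  inv_mem' := by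
    rintro σ ⟨h1, h2, h3, h4⟩
    refine ⟨fun e => ?_, fun e => ?_, fun v => ?_, fun e => ?_⟩
    · have := h1 (σ.2⁻¹ e)
      simp only [Equiv.Perm.inv_def, Equiv.apply_symm_apply] at this
      simp [Prod.fst_inv, Prod.snd_inv, this]
    · have := h2 (σ.2⁻¹ e)
      simp only [Equiv.Perm.inv_def, Equiv.apply_symm_apply] at this
      simp [Prod.fst_inv, Prod.snd_inv, this]
    · have := h3 (σ.1⁻¹ v)
      simp only [Equiv.Perm.inv_def, Equiv.apply_symm_apply] at this
      simp [Prod.fst_inv, this]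
    · have := h4 (σ.2⁻¹ e)
      simp only [Equiv.Perm.inv_def, Equiv.apply_symm_apply] at this
      simp [Prod.snd_inv, this]

/-- A covering is Galois if it is `d`-sheeted where `d` is the number of its deck
transformations. -/
def IsGaloisCov {Y X : Digraph'} (f : DigraphHom Y X) : Prop :=
  IsGraphCovering f ∧ ∃ d : ℕ, IsSheeted f d ∧ Nat.card ↥(DeckGroup f) = d

/-- An isomorphism of directed multigraphs. -/
structure DigraphIso (Y X : Digraph') where
  onV : Y.V ≃ X.V
  onE : Y.E ≃ X.E
  map_src : ∀ e, X.src (onE e) = onV (Y.src e)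
  map_tgt : ∀ e, X.tgt (onE e) = onV (Y.tgt e)

/-- An undirected multigraph, encoded à la Serre: every undirected edge is recorded
as a pair of mutually inverse directed edges. -/
structure SerreGraph : Type 1 extends Digraph' where
  inv : E → E
  inv_inv : ∀ e, inv (inv e) = e
  src_inv : ∀ e, src (inv e) = tgt e
  tgt_inv : ∀ e, tgt (inv e) = src e

namespace SerreGraph

variable (X : SerreGraph)

/-- The subgraph of an undirected multigraph generated by a set `S` of vertices. -/
def inducedClosed (S : Set X.V) : SerreGraph where
  V := S
  E := {e : X.E // X.src e ∈ S ∧ X.tgt e ∈ S}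
  src e := ⟨X.src e.1, e.2.1⟩
  tgt e := ⟨X.tgt e.1, e.2.2⟩
  inv e := ⟨X.inv e.1, by rw [X.src_inv, X.tgt_inv]; exact ⟨e.2.2, e.2.1⟩⟩
  inv_inv e := Subtype.ext (X.inv_inv e.1)
  src_inv e := Subtype.ext (X.src_inv e.1)
  tgt_inv e := Subtype.ext (X.tgt_inv e.1)

/-- The connected component of a vertex, as an undirected multigraph. -/
def component (v : X.V) : SerreGraph :=
  X.inducedClosed (X.toDigraph'.ComponentSet v)

end SerreGraph

/-- The undirected multigraph underlying a directed multigraph (the image of the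
directed graph under the forgetful map). -/
def Digraph'.toSerre (X : Digraph') : SerreGraph where
  V := X.V
  E := X.E × Bool
  src e := if e.2 then X.src e.1 else X.tgt e.1
  tgt e := if e.2 then X.tgt e.1 else X.src e.1
  inv e := (e.1, !e.2)
  inv_inv e := by cases e with
    | mk a b => cases b <;> rfl
  src_inv e := by cases e with
    | mk a b => cases b <;> rfl
  tgt_inv e := by cases e with
    | mk a b => cases b <;> rfl

/-- A morphism of undirected multigraphs. -/
structure SerreHom (Y X : SerreGraph) where
  onV : Y.V → X.V
  onE : Y.E → X.E
  map_src : ∀ e, X.src (onE e) = onV (Y.src e)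
  map_tgt : ∀ e, X.tgt (onE e) = onV (Y.tgt e)
  map_inv : ∀ e, X.inv (onE e) = onE (Y.inv e)

/-- The underlying morphism of directed multigraphs. -/
def SerreHom.toDigraphHom {Y X : SerreGraph} (f : SerreHom Y X) :
    DigraphHom Y.toDigraph' X.toDigraph' :=
  ⟨f.onV, f.onE, f.map_src, f.map_tgt⟩

/-- An isomorphism of undirected multigraphs. -/
structure SerreIso (Y X : SerreGraph) where
  onV : Y.V ≃ X.V
  onE : Y.E ≃ X.E
  map_src : ∀ e, X.src (onE e) = onV (Y.src e)
  map_tgt : ∀ e, X.tgt (onE e) = onV (Y.tgt e)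
  map_inv : ∀ e, X.inv (onE e) = onE (Y.inv e)

/-- The group of deck transformations of a morphism of undirected multigraphs. -/
def SerreDeckGroup {Y X : SerreGraph} (f : SerreHom Y X) :
    Subgroup (Equiv.Perm Y.V × Equiv.Perm Y.E) where
  carrier := {σ | (∀ e, Y.src (σ.2 e) = σ.1 (Y.src e)) ∧
    (∀ e, Y.tgt (σ.2 e) = σ.1 (Y.tgt e)) ∧
    (∀ e, Y.inv (σ.2 e) = σ.2 (Y.inv e)) ∧
    (∀ v, f.onV (σ.1 v) = f.onV v) ∧ (∀ e, f.onE (σ.2 e) = f.onE e)}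
  one_mem' := ⟨fun _ => rfl, fun _ => rfl, fun _ => rfl, fun _ => rfl, fun _ => rfl⟩
  mul_mem' := by
    rintro σ τ ⟨h1, h2, h3, h4, h5⟩ ⟨g1, g2, g3, g4, g5⟩
    exact ⟨fun e => by simp [Equiv.Perm.mul_apply, h1, g1],
      fun e => by simp [Equiv.Perm.mul_apply, h2, g2],
      fun e => by simp [Equiv.Perm.mul_apply, h3, g3],
      fun v => by simp [Equiv.Perm.mul_apply, h4, g4],
      fun e => by simp [Equiv.Perm.mul_apply, h5, g5]⟩
  inv_mem' := by
    rintro σ ⟨h1, h2, h3, h4, h5⟩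
    refine ⟨fun e => ?_, fun e => ?_, fun e => ?_, fun v => ?_, fun e => ?_⟩
    · have := h1 (σ.2⁻¹ e)
      simp only [Equiv.Perm.inv_def, Equiv.apply_symm_apply] at this
      simp [Prod.fst_inv, Prod.snd_inv, this]
    · have := h2 (σ.2⁻¹ e)
      simp only [Equiv.Perm.inv_def, Equiv.apply_symm_apply] at this
      simp [Prod.fst_inv, Prod.snd_inv, this]
    · have := h3 (σ.2⁻¹ e)
      simp only [Equiv.Perm.inv_def, Equiv.apply_symm_apply] at this
      simp only [Prod.snd_inv]
      rw [this]
      simp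
    · have := h4 (σ.1⁻¹ v)
      simp only [Equiv.Perm.inv_def, Equiv.apply_symm_apply] at this
      simp [Prod.fst_inv, this]
    · have := h5 (σ.2⁻¹ e)
      simp only [Equiv.Perm.inv_def, Equiv.apply_symm_apply] at this
      simp [Prod.snd_inv, this]

/-- A morphism of undirected multigraphs is a Galois covering if it is a covering
which is `d`-sheeted, where `d` is the number of its deck transformations. -/
def IsGaloisSerreCov {Y X : SerreGraph} (f : SerreHom Y X) : Prop :=
  IsGraphCovering f.toDigraphHom ∧
    ∃ d : ℕ, IsSheeted f.toDigraphHom d ∧ Nat.card ↥(SerreDeckGroup f) = d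
/-- A directed multigraph each of whose edges is colored blue (`true`) or
green (`false`). -/
structure ColoredDigraph : Type 1 extends Digraph' where
  color : E → Bool

/-- An isomorphism of edge-colored directed multigraphs. -/
structure ColoredIso (Y X : ColoredDigraph) where
  onV : Y.V ≃ X.V
  onE : Y.E ≃ X.E
  map_src : ∀ e, X.src (onE e) = onV (Y.src e)
  map_tgt : ∀ e, X.tgt (onE e) = onV (Y.tgt e)
  map_color : ∀ e, X.color (onE e) = Y.color e

/-- A directed cycle graph: a connected directed multigraph, with finitely many
vertices and edges, in which every vertex has in-degree one and out-degree one. -/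
def IsDirectedCycle (X : Digraph') : Prop :=
  X.Connected ∧ Finite X.V ∧ Finite X.E ∧
    ∀ v : X.V, Nat.card {e : X.E // X.src e = v} = 1 ∧
      Nat.card {e : X.E // X.tgt e = v} = 1

/-- An abstract tectonic crater of parameters `(r, s, t, c)`: an edge-colored
directed multigraph with `r * s * t` vertices such that at each vertex there is
exactly one blue (resp. green) edge with that vertex as source and exactly one with
it as target; starting at each vertex there is exactly one closed blue (resp. green)
path without backtracks, of length `r * s` (resp. `r * t`) -- equivalently, the
"blue successor" and "green successor" maps `b` and `g` have minimal period `r * s`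
(resp. `r * t`) at every vertex; and after every `s` steps along the blue path and
every `c * t` steps along the green path the two paths meet at a common vertex. -/
def IsTectonicCraterWith (X : ColoredDigraph) (r s t c : ℕ) : Prop :=
  Nat.card X.V = r * s * t ∧
  ∃ b g : X.V → X.V,
    (∀ v, ∃! e : X.E, X.src e = v ∧ X.color e = true) ∧
    (∀ v, ∃! e : X.E, X.tgt e = v ∧ X.color e = true) ∧
    (∀ v, ∃! e : X.E, X.src e = v ∧ X.color e = false) ∧
    (∀ v, ∃! e : X.E, X.tgt e = v ∧ X.color e = false) ∧
    (∀ e, X.color e = true → X.tgt e = b (X.src e)) ∧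
    (∀ e, X.color e = false → X.tgt e = g (X.src e)) ∧
    (∀ v, Function.minimalPeriod b v = r * s) ∧
    (∀ v, Function.minimalPeriod g v = r * t) ∧
    (∀ v, b^[s] v = g^[c * t] v)

/-- An abstract tectonic crater (of some parameters). -/
def IsAbstractTectonicCrater (X : ColoredDigraph) : Prop :=
  ∃ r s t c : ℕ, IsTectonicCraterWith X r s t c

/-- An abstract crater: either a connected directed cycle graph or a totally
disconnected finite graph. -/
def IsAbstractCrater (X : Digraph') : Prop :=
  IsDirectedCycle X ∨ (IsEmpty X.E ∧ Finite X.V)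

/-- The crater of a directed multigraph equipped with a depth function: the subgraph
generated by the vertices of depth zero. -/
def craterOf (D : Digraph') (lvl : D.V → ℕ) : Digraph' :=
  D.induced {v | lvl v = 0}

/-- The common part of the definitions of an `ℓ`-volcano and of a tectonic
`ℓ`-volcano, for a directed multigraph equipped with a depth decomposition
`V = ⊔ V_i` (encoded by the function `lvl`): every vertex has out-degree `ℓ + 1`;
an edge between `V_i` and `V_j` forces `|i - j| = 1` or `i = j = 0`; and every
vertex of depth `i ≥ 1` has exactly one edge to `V_{i-1}` and `ℓ` edges
to `V_{i+1}`. -/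
def IsVolcanoWith (D : Digraph') (ℓ : ℕ) (lvl : D.V → ℕ) : Prop :=
  (∀ v : D.V, Nat.card {e : D.E // D.src e = v} = ℓ + 1) ∧
  (∀ e : D.E, lvl (D.src e) = lvl (D.tgt e) + 1 ∨ lvl (D.tgt e) = lvl (D.src e) + 1 ∨
    (lvl (D.src e) = 0 ∧ lvl (D.tgt e) = 0)) ∧
  (∀ v : D.V, 1 ≤ lvl v →
    Nat.card {e : D.E // D.src e = v ∧ lvl (D.tgt e) + 1 = lvl v} = 1 ∧
    Nat.card {e : D.E // D.src e = v ∧ lvl (D.tgt e) = lvl v + 1} = ℓ)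

/-- An undirected `ℓ`-volcano: the image under the forgetful map of a directed
`ℓ`-volcano, i.e. of a directed multigraph with a depth decomposition satisfying
`IsVolcanoWith` and whose crater is an abstract crater. -/
def IsUndirectedVolcano (Y : SerreGraph) (ℓ : ℕ) : Prop :=
  ∃ (D : Digraph') (lvl : D.V → ℕ), IsVolcanoWith D ℓ lvl ∧
    IsAbstractCrater (craterOf D lvl) ∧ Nonempty (SerreIso D.toSerre Y)

/-- An undirected tectonic `ℓ`-volcano: the image under the forgetful map of a
directed tectonic `ℓ`-volcano, i.e. of a directed multigraph with a depth
decomposition satisfying `IsVolcanoWith` and whose crater (with a suitable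
coloring of its edges) is an abstract tectonic crater. -/
def IsUndirectedTectonicVolcano (Y : SerreGraph) (ℓ : ℕ) : Prop :=
  ∃ (D : Digraph') (lvl : D.V → ℕ), IsVolcanoWith D ℓ lvl ∧
    (∃ col : (craterOf D lvl).E → Bool,
      IsAbstractTectonicCrater ⟨craterOf D lvl, col⟩) ∧
    Nonempty (SerreIso D.toSerre Y)


section KeyACr

variable {V : Type} [Finite V]

lemma mulmulACr {σ τ : Equiv.Perm V} (hc : Commute σ τ) (i j a b : ℤ) :
    (σ ^ i * τ ^ j) * (σ ^ a * τ ^ b) = σ ^ (i + a) * τ ^ (j + b) := by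
  rw [zpow_add, zpow_add, (hc.symm.zpow_zpow j a).mul_mul_mul_comm]

lemma existsMinACr (σ τ : Equiv.Perm V) :
    ∃ t : ℕ, 0 < t ∧ τ ^ (t : ℤ) ∈ Subgroup.zpowers σ ∧
      ∀ k : ℤ, τ ^ k ∈ Subgroup.zpowers σ → (t : ℤ) ∣ k := by
  set S : AddSubgroup ℤ :=
    { carrier := {k : ℤ | τ ^ k ∈ Subgroup.zpowers σ}
      zero_mem' := by
        show τ ^ (0 : ℤ) ∈ Subgroup.zpowers σ
        rw [zpow_zero]; exact one_mem _
      add_mem' := by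
        intro a b ha hb
        show τ ^ (a + b) ∈ Subgroup.zpowers σ
        rw [zpow_add]
        exact mul_mem ha hb
      neg_mem' := by
        intro a ha
        show τ ^ (-a) ∈ Subgroup.zpowers σ
        rw [zpow_neg]
        exact inv_mem ha } with hSdef
  obtain ⟨a, hS⟩ := Int.subgroup_cyclic S
  have hmem : ∀ k : ℤ, τ ^ k ∈ Subgroup.zpowers σ ↔ a ∣ k := by
    intro k
    constructor
    · intro hk
      have : k ∈ S := hk
      rw [hS, AddSubgroup.mem_closure_singleton] at this
      obtain ⟨q, hq⟩ := this
      rw [zsmul_eq_mul] at hq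
      exact ⟨q, by rw [← hq]; push_cast; ring⟩
    · rintro ⟨q, rfl⟩
      have : a * q ∈ S := by
        rw [hS, AddSubgroup.mem_closure_singleton]
        exact ⟨q, by rw [zsmul_eq_mul]; push_cast; ring⟩
      exact this
  have hn : τ ^ ((orderOf τ : ℕ) : ℤ) ∈ Subgroup.zpowers σ := by
    rw [zpow_natCast, pow_orderOf_eq_one]; exact one_mem _
  have hne : a ≠ 0 := by
    intro h
    have := (hmem _).mp hn
    rw [h] at this
    have : ((orderOf τ : ℕ) : ℤ) = 0 := zero_dvd_iff.mp this
    have hpos := orderOf_pos τ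
    omega
  refine ⟨a.natAbs, by omega, ?_, ?_⟩
  · exact (hmem _).mpr (Int.dvd_natAbs.mpr dvd_rfl)
  · intro k hk
    exact Int.natAbs_dvd.mpr ((hmem k).mp hk)

lemma countACr (σ τ : Equiv.Perm V) (hc : Commute σ τ) (v0 : V)
    (hsurj : ∀ w : V, ∃ i j : ℤ, (σ ^ i * τ ^ j) v0 = w)
    (free : ∀ i j : ℤ, (σ ^ i * τ ^ j) v0 = v0 → σ ^ i * τ ^ j = 1)
    (t : ℕ) (ht : 0 < t) (hmemt : τ ^ (t : ℤ) ∈ Subgroup.zpowers σ)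
    (hmin : ∀ k : ℤ, τ ^ k ∈ Subgroup.zpowers σ → (t : ℤ) ∣ k) :
    Nat.card V = orderOf σ * t := by
  set m := orderOf σ with hm
  have hmpos : 0 < m := orderOf_pos σ
  have hm1 : σ ^ (m : ℤ) = 1 := by rw [zpow_natCast, pow_orderOf_eq_one]
  set F : Fin m × Fin t → V := fun p => (σ ^ ((p.1 : ℕ) : ℤ) * τ ^ ((p.2 : ℕ) : ℤ)) v0 with hF
  have hbij : Function.Bijective F := by
    constructor
    · rintro ⟨⟨i, hi⟩, ⟨j, hj⟩⟩ ⟨⟨a', ha⟩, ⟨b', hb'⟩⟩ h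
      simp only [hF] at h
      have h2 : (σ ^ (-(a' : ℤ) + i) * τ ^ (-(b' : ℤ) + j)) v0 = v0 := by
        have := congrArg (⇑(σ ^ (-(a' : ℤ)) * τ ^ (-(b' : ℤ)))) h
        rw [← Equiv.Perm.mul_apply, ← Equiv.Perm.mul_apply, mulmulACr hc, mulmulACr hc] at this
        simpa using this
      have h3 := free _ _ h2
      have htau : τ ^ (-(b' : ℤ) + j) ∈ Subgroup.zpowers σ := by
        refine ⟨-(-(a' : ℤ) + i), ?_⟩
        simp only [zpow_neg]
        exact inv_eq_of_mul_eq_one_right h3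
      have hdvd := hmin _ htau
      have hjb : (j : ℤ) = b' := by
        have := Int.eq_zero_of_abs_lt_dvd hdvd (by rw [abs_lt]; omega)
        omega
      have hsig : σ ^ (-(a' : ℤ) + i) = 1 := by
        have : τ ^ (-(b' : ℤ) + j) = 1 := by rw [show -(b' : ℤ) + j = 0 by omega, zpow_zero]
        rw [this, mul_one] at h3
        exact h3
      have hia : (i : ℤ) = a' := by
        have hd := orderOf_dvd_iff_zpow_eq_one.mpr hsig
        rw [← hm] at hd
        have := Int.eq_zero_of_abs_lt_dvd hd (by rw [abs_lt]; omega)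
        omega
      have : i = a' := by exact_mod_cast hia
      have hj' : j = b' := by exact_mod_cast hjb
      subst this; subst hj'; rfl
    · intro w
      obtain ⟨i, j, hij⟩ := hsurj w
      obtain ⟨x, hx⟩ := Subgroup.mem_zpowers_iff.mp hmemt
      set q := j / (t : ℤ) with hq
      set j0 := j % (t : ℤ) with hj0
      have hjeq : j = (t : ℤ) * q + j0 := (Int.mul_ediv_add_emod j t).symm
      set i1 := i + x * q with hi1
      set i0 := i1 % (m : ℤ) with hi0
      have hieq : i1 = (m : ℤ) * (i1 / (m : ℤ)) + i0 := (Int.mul_ediv_add_emod i1 m).symm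
      have keyeq : σ ^ i0 * τ ^ j0 = σ ^ i * τ ^ j := by
        have e1 : τ ^ j = σ ^ (x * q) * τ ^ j0 := by
          rw [hjeq, zpow_add, zpow_mul, zpow_mul, hx]
        have e2 : σ ^ i0 = σ ^ i1 := by
          rw [hieq, zpow_add, zpow_mul, hm1, one_zpow, one_mul]
        rw [e1, e2, hi1, zpow_add, mul_assoc]
      have hi0b : 0 ≤ i0 ∧ i0 < m := ⟨Int.emod_nonneg _ (by positivity), Int.emod_lt_of_pos _ (by exact_mod_cast hmpos)⟩
      have hj0b : 0 ≤ j0 ∧ j0 < t := ⟨Int.emod_nonneg _ (by positivity), Int.emod_lt_of_pos _ (by exact_mod_cast ht)⟩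
      refine ⟨⟨⟨i0.toNat, by omega⟩, ⟨j0.toNat, by omega⟩⟩, ?_⟩
      simp only [hF]
      rw [Int.toNat_of_nonneg hi0b.1, Int.toNat_of_nonneg hj0b.1, keyeq, hij]
  rw [← Nat.card_eq_of_bijective F hbij]
  simp [Nat.card_eq_fintype_card]


lemma keyACr (σ τ : Equiv.Perm V) (hc : Commute σ τ) (v0 : V)
    (htrans : ∀ v w : V, ∃ i j : ℤ, (σ ^ i * τ ^ j) v = w) :
    ∃ r s t c : ℕ, Nat.card V = r * s * t ∧
      (∀ v, Function.minimalPeriod (⇑σ) v = r * s) ∧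
      (∀ v, Function.minimalPeriod (⇑τ) v = r * t) ∧
      (∀ v, (⇑σ)^[s] v = (⇑τ)^[c * t] v) := by
  have free : ∀ i j : ℤ, (∃ v, (σ ^ i * τ ^ j) v = v) → σ ^ i * τ ^ j = 1 := by
    rintro i j ⟨v, hv⟩
    ext w
    obtain ⟨a, b, hab⟩ := htrans v w
    have : (σ ^ i * τ ^ j) ((σ ^ a * τ ^ b) v) = (σ ^ a * τ ^ b) ((σ ^ i * τ ^ j) v) := by
      rw [← Equiv.Perm.mul_apply, ← Equiv.Perm.mul_apply, mulmulACr hc, mulmulACr hc,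
        add_comm i a, add_comm j b]
    rw [hab] at this
    rw [this, hv, hab]
    rfl
  set m := orderOf σ with hm
  set n := orderOf τ with hn
  have hmpos : 0 < m := orderOf_pos σ
  have hnpos : 0 < n := orderOf_pos τ
  have hm1 : σ ^ (m : ℤ) = 1 := by rw [zpow_natCast, pow_orderOf_eq_one]
  have hn1 : τ ^ (n : ℤ) = 1 := by rw [zpow_natCast, pow_orderOf_eq_one]
  obtain ⟨t, ht, htmem, htmin⟩ := existsMinACr σ τ
  obtain ⟨s, hs, hsmem, hsmin⟩ := existsMinACr τ σ
  -- s divides m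
  have hsm : s ∣ m := by
    have : (s : ℤ) ∣ (m : ℤ) := hsmin _ (by rw [hm1]; exact one_mem _)
    exact_mod_cast this
  -- counting
  have hN1 : Nat.card V = m * t :=
    countACr σ τ hc v0 (htrans v0) (fun i j h => free i j ⟨v0, h⟩) t ht htmem htmin
  have hN2 : Nat.card V = n * s := by
    refine countACr τ σ hc.symm v0 ?_ ?_ s hs hsmem hsmin
    · intro w
      obtain ⟨i, j, hij⟩ := htrans v0 w
      exact ⟨j, i, by rw [← (hc.zpow_zpow i j).eq]; exact hij⟩
    · intro i j h
      rw [(hc.symm.zpow_zpow i j).eq] at h ⊢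
      exact free j i ⟨v0, h⟩
  set r := m / s with hr
  have hrs : r * s = m := Nat.div_mul_cancel hsm
  have hrt : r * t = n := by
    have h1 : m * t = n * s := by rw [← hN1, hN2]
    have h2 : r * t * s = n * s := by
      rw [show r * t * s = r * s * t by ring, hrs, h1]
    exact Nat.eq_of_mul_eq_mul_right hs h2
  -- minimal periods
  have hperS : ∀ v, Function.minimalPeriod (⇑σ) v = m := by
    intro v
    have hper : Function.IsPeriodicPt (⇑σ) m v := by
      show (⇑σ)^[m] v = v
      rw [Equiv.Perm.iterate_eq_pow, hm, pow_orderOf_eq_one]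
      rfl
    refine Nat.dvd_antisymm (hper.minimalPeriod_dvd) ?_
    have hk : (⇑σ)^[Function.minimalPeriod (⇑σ) v] v = v := Function.iterate_minimalPeriod
    rw [Equiv.Perm.iterate_eq_pow] at hk
    have h1 : σ ^ ((Function.minimalPeriod (⇑σ) v : ℕ) : ℤ) * τ ^ (0 : ℤ) = 1 := by
      refine free _ _ ⟨v, ?_⟩
      rw [zpow_zero, mul_one, zpow_natCast]
      exact hk
    rw [zpow_zero, mul_one] at h1
    exact_mod_cast orderOf_dvd_iff_zpow_eq_one.mpr h1
  have hperT : ∀ v, Function.minimalPeriod (⇑τ) v = n := by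
    intro v
    have hper : Function.IsPeriodicPt (⇑τ) n v := by
      show (⇑τ)^[n] v = v
      rw [Equiv.Perm.iterate_eq_pow, hn, pow_orderOf_eq_one]
      rfl
    refine Nat.dvd_antisymm (hper.minimalPeriod_dvd) ?_
    have hk : (⇑τ)^[Function.minimalPeriod (⇑τ) v] v = v := Function.iterate_minimalPeriod
    rw [Equiv.Perm.iterate_eq_pow] at hk
    have h1 : σ ^ (0 : ℤ) * τ ^ ((Function.minimalPeriod (⇑τ) v : ℕ) : ℤ) = 1 := by
      refine free _ _ ⟨v, ?_⟩
      rw [zpow_zero, one_mul, zpow_natCast]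
      exact hk
    rw [zpow_zero, one_mul] at h1
    exact_mod_cast orderOf_dvd_iff_zpow_eq_one.mpr h1
  -- the meeting condition
  obtain ⟨j1, hj1⟩ := Subgroup.mem_zpowers_iff.mp hsmem
  -- hj1 : τ ^ j1 = σ ^ (s : ℤ)
  have hj1d : (t : ℤ) ∣ j1 := htmin j1 (by rw [hj1]; exact ⟨(s : ℤ), rfl⟩)
  obtain ⟨c0, hc0⟩ := hj1d
  set c := (c0 % (n : ℤ)).toNat with hcdef
  have hcnn : 0 ≤ c0 % (n : ℤ) := Int.emod_nonneg _ (by positivity)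
  have hczeq : σ ^ ((s : ℕ) : ℤ) = τ ^ (((c * t : ℕ) : ℕ) : ℤ) := by
    have e1 : σ ^ ((s : ℕ) : ℤ) = τ ^ ((t : ℤ) * c0) := by rw [← hc0, hj1]
    have e2 : ((c * t : ℕ) : ℤ) = (t : ℤ) * (c0 % (n : ℤ)) := by
      push_cast
      rw [hcdef, Int.toNat_of_nonneg hcnn]
      ring
    rw [e1, e2]
    have : (t : ℤ) * c0 = (t : ℤ) * (c0 % (n : ℤ)) + (n : ℤ) * ((t : ℤ) * (c0 / (n : ℤ))) := by
      have := Int.mul_ediv_add_emod c0 (n : ℤ)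
      ring_nf
      nlinarith [this]
    rw [this, zpow_add]
    have h4 : τ ^ ((n : ℤ) * ((t : ℤ) * (c0 / (n : ℤ)))) = 1 := by
      rw [zpow_mul, hn1, one_zpow]
    rw [h4, mul_one]
  have hmeet : ∀ v, (⇑σ)^[s] v = (⇑τ)^[c * t] v := by
    intro v
    rw [Equiv.Perm.iterate_eq_pow, Equiv.Perm.iterate_eq_pow]
    have : σ ^ (s : ℕ) = τ ^ (c * t : ℕ) := by
      have := hczeq
      rw [zpow_natCast, zpow_natCast] at this
      exact this
    rw [this]
  exact ⟨r, s, t, c, by rw [hN1, ← hrs], fun v => by rw [hperS v, hrs], fun v => by rw [hperT v, hrt], hmeet⟩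

end KeyACr

/-- **Lemma (Galois coverings of abstract tectonic craters).**
Let `X` be an abstract tectonic crater and let `f : Y → X` be a Galois covering of
finite connected graphs.  Color each edge `e` of `Y` by the color of `f e`; then at
each vertex `v` of `Y` there is exactly one blue (resp. green) edge with source `v`,
and `bY v` (resp. `gY v`) denotes its target.  If `bY ∘ gY = gY ∘ bY`, then `Y` is
an abstract tectonic crater. -/
theorem galois_cover_of_tectonic_crater_isTectonicCrater
    (X Y : ColoredDigraph)
    (hXV : Finite X.V) (hXE : Finite X.E) (hYV : Finite Y.V) (hYE : Finite Y.E)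
    (hXconn : X.toDigraph'.Connected) (hYconn : Y.toDigraph'.Connected)
    (f : DigraphHom Y.toDigraph' X.toDigraph')
    (hcolor : ∀ e, Y.color e = X.color (f.onE e))
    (hgal : IsGaloisCov f)
    (hX : IsAbstractTectonicCrater X)
    (bY gY : Y.V → Y.V)
    (hbEx : ∀ v, ∃ e : Y.E, Y.src e = v ∧ Y.color e = true)
    (hb : ∀ e : Y.E, Y.color e = true → Y.tgt e = bY (Y.src e))
    (hgEx : ∀ v, ∃ e : Y.E, Y.src e = v ∧ Y.color e = false)
    (hg : ∀ e : Y.E, Y.color e = false → Y.tgt e = gY (Y.src e))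
    (hcomm : bY ∘ gY = gY ∘ bY) :
    IsAbstractTectonicCrater Y := by
  rcases isEmpty_or_nonempty Y.V with hemp | hne
  · refine ⟨0, 0, 0, 0, by simp [Nat.card_eq_zero], id, id, ?_, ?_, ?_, ?_, ?_, ?_, ?_, ?_, ?_⟩
    · exact fun v => isEmptyElim v
    · exact fun v => isEmptyElim v
    · exact fun v => isEmptyElim v
    · exact fun v => isEmptyElim v
    · exact fun e => isEmptyElim (Y.src e)
    · exact fun e => isEmptyElim (Y.src e)
    · exact fun v => isEmptyElim v
    · exact fun v => isEmptyElim v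
    · exact fun v => isEmptyElim v
  haveI := hYV
  obtain ⟨hsurjV, hcovsrc, hcovtgt⟩ := hgal.1
  obtain ⟨r0, s0, t0, c0, hXc, b0, g0, hXb1, hXb2, hXg1, hXg2, hXb5, hXg6, hXp1, hXp2, hXmeet⟩ := hX
  -- uniqueness of colored edges in Y, via the covering
  have hbu : ∀ v, ∃! e : Y.E, Y.src e = v ∧ Y.color e = true := by
    intro v
    obtain ⟨e, he1, he2⟩ := hbEx v
    refine ⟨e, ⟨he1, he2⟩, ?_⟩
    rintro e' ⟨h1, h2⟩
    refine (hcovsrc v).injOn h1 he1 ?_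
    obtain ⟨E, -, hEu⟩ := hXb1 (f.onV v)
    rw [hEu (f.onE e') ⟨by rw [f.map_src, h1], by rw [← hcolor]; exact h2⟩,
        hEu (f.onE e) ⟨by rw [f.map_src, he1], by rw [← hcolor]; exact he2⟩]
  have hgu : ∀ v, ∃! e : Y.E, Y.src e = v ∧ Y.color e = false := by
    intro v
    obtain ⟨e, he1, he2⟩ := hgEx v
    refine ⟨e, ⟨he1, he2⟩, ?_⟩
    rintro e' ⟨h1, h2⟩
    refine (hcovsrc v).injOn h1 he1 ?_
    obtain ⟨E, -, hEu⟩ := hXg1 (f.onV v)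
    rw [hEu (f.onE e') ⟨by rw [f.map_src, h1], by rw [← hcolor]; exact h2⟩,
        hEu (f.onE e) ⟨by rw [f.map_src, he1], by rw [← hcolor]; exact he2⟩]
  have hbt : ∀ v, ∃! e : Y.E, Y.tgt e = v ∧ Y.color e = true := by
    intro v
    obtain ⟨E, ⟨hE1, hE2⟩, hEu⟩ := hXb2 (f.onV v)
    obtain ⟨e, he, hfe⟩ := (hcovtgt v).surjOn hE1
    refine ⟨e, ⟨he, by rw [hcolor, hfe]; exact hE2⟩, ?_⟩
    rintro e' ⟨h1, h2⟩
    refine (hcovtgt v).injOn h1 he ?_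
    rw [hfe, hEu (f.onE e') ⟨by rw [f.map_tgt, h1], by rw [← hcolor]; exact h2⟩]
  have hgt : ∀ v, ∃! e : Y.E, Y.tgt e = v ∧ Y.color e = false := by
    intro v
    obtain ⟨E, ⟨hE1, hE2⟩, hEu⟩ := hXg2 (f.onV v)
    obtain ⟨e, he, hfe⟩ := (hcovtgt v).surjOn hE1
    refine ⟨e, ⟨he, by rw [hcolor, hfe]; exact hE2⟩, ?_⟩
    rintro e' ⟨h1, h2⟩
    refine (hcovtgt v).injOn h1 he ?_
    rw [hfe, hEu (f.onE e') ⟨by rw [f.map_tgt, h1], by rw [← hcolor]; exact h2⟩]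
  -- the successor maps are bijective
  have hbinj : Function.Injective bY := by
    intro v1 v2 h12
    obtain ⟨e1, he1s, he1c⟩ := hbEx v1
    obtain ⟨e2, he2s, he2c⟩ := hbEx v2
    obtain ⟨E, -, hEu⟩ := hbt (bY v1)
    have t1 : Y.tgt e1 = bY v1 := by rw [hb e1 he1c, he1s]
    have t2 : Y.tgt e2 = bY v1 := by rw [hb e2 he2c, he2s, ← h12]
    have he : e1 = e2 := by rw [hEu e1 ⟨t1, he1c⟩, hEu e2 ⟨t2, he2c⟩]
    rw [← he1s, ← he2s, he]
  have hginj : Function.Injective gY := by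
    intro v1 v2 h12
    obtain ⟨e1, he1s, he1c⟩ := hgEx v1
    obtain ⟨e2, he2s, he2c⟩ := hgEx v2
    obtain ⟨E, -, hEu⟩ := hgt (gY v1)
    have t1 : Y.tgt e1 = gY v1 := by rw [hg e1 he1c, he1s]
    have t2 : Y.tgt e2 = gY v1 := by rw [hg e2 he2c, he2s, ← h12]
    have he : e1 = e2 := by rw [hEu e1 ⟨t1, he1c⟩, hEu e2 ⟨t2, he2c⟩]
    rw [← he1s, ← he2s, he]
  have hbbij : Function.Bijective bY := Finite.injective_iff_bijective.mp hbinj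
  have hgbij : Function.Bijective gY := Finite.injective_iff_bijective.mp hginj
  set σ : Equiv.Perm Y.V := Equiv.ofBijective bY hbbij with hσ
  set τ : Equiv.Perm Y.V := Equiv.ofBijective gY hgbij with hτ
  have hc : Commute σ τ := by
    show σ * τ = τ * σ
    ext v
    rw [Equiv.Perm.mul_apply, Equiv.Perm.mul_apply]
    exact congrFun hcomm v
  have hAdj : ∀ v w, Y.toDigraph'.Adj v w → ∃ i j : ℤ, (σ ^ i * τ ^ j) v = w := by
    rintro v w ⟨e, rfl, rfl⟩
    rcases Bool.eq_false_or_eq_true (Y.color e) with hcol | hcol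
    · exact ⟨1, 0, by rw [zpow_one, zpow_zero, mul_one]; exact (hb e hcol).symm⟩
    · exact ⟨0, 1, by rw [zpow_zero, zpow_one, one_mul]; exact (hg e hcol).symm⟩
  have htrans : ∀ v w : Y.V, ∃ i j : ℤ, (σ ^ i * τ ^ j) v = w := by
    intro v w
    induction hYconn v w with
    | rel a b h => exact hAdj a b h
    | refl a => exact ⟨0, 0, by simp⟩
    | symm a b h ih =>
      obtain ⟨i, j, hij⟩ := ih
      refine ⟨-i, -j, ?_⟩
      rw [← hij, ← Equiv.Perm.mul_apply, mulmulACr hc, neg_add_cancel, neg_add_cancel,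
        zpow_zero, zpow_zero, one_mul]
      rfl
    | trans a b cc h1 h2 ih1 ih2 =>
      obtain ⟨i, j, hij⟩ := ih1
      obtain ⟨a2, b2, hab⟩ := ih2
      refine ⟨a2 + i, b2 + j, ?_⟩
      rw [← mulmulACr hc, Equiv.Perm.mul_apply, hij, hab]
  obtain ⟨r, s, t, c, h1, h2, h3, h4⟩ := keyACr σ τ hc (Classical.arbitrary Y.V) htrans
  exact ⟨r, s, t, c, h1, bY, gY, hbu, hbt, hgu, hgt, hb, hg, h2, h3, h4⟩
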